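/- Let a, b, A, B, S, m₀, θ, μ, ν, h₁, h₂, b₁, b₂ be positive real numbers with a ≤ b < A ≤ B. Assume that for every β ∈ {a, b} and every h ∈ {A, B} one has h₁ ≤ hβ/(h−β) ≤ h₂ and b₁ ≤ β/(h−β) ≤ b₂. If S · min(ν^{1/A}, ν^{1/B}) ≤ max(μ^{1/a}, μ^{1/b}) and m₀ μ ≤ θ ν, then μ ≥ min(S^{h₁}, S^{h₂}) · min((m₀/θ)^{b₁}, (m₀/θ)^{b₂}). -/

import Mathlib

open Real

lemma min_rpow_le_aux {x p q e : ℝ} (hx : 0 < x) (hpe : p ≤ e) (heq : e ≤ q) :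
    min (x ^ p) (x ^ q) ≤ x ^ e := by
  rcases le_total 1 x with h | h
  · exact le_trans (min_le_left _ _) (rpow_le_rpow_of_exponent_le h hpe)
  · exact le_trans (min_le_right _ _) (rpow_le_rpow_of_exponent_ge hx h heq)

lemma core_aux (β h S m₀ θ μ ν h₁ h₂ b₁ b₂ : ℝ)
    (hβ : 0 < β) (hβh : β < h) (hS : 0 < S)
    (hm₀ : 0 < m₀) (hθ : 0 < θ) (hμ : 0 < μ) (hν : 0 < ν)
    (hE1 : h₁ ≤ h * β / (h - β)) (hE2 : h * β / (h - β) ≤ h₂)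
    (hF1 : b₁ ≤ β / (h - β)) (hF2 : β / (h - β) ≤ b₂)
    (key : S * ν ^ (1 / h) ≤ μ ^ (1 / β)) (h2 : m₀ * μ ≤ θ * ν) :
    min (S ^ h₁) (S ^ h₂) * min ((m₀ / θ) ^ b₁) ((m₀ / θ) ^ b₂) ≤ μ := by
  have hh : 0 < h := hβ.trans hβh
  have hhβ : 0 < h - β := by linarith
  set E := h * β / (h - β) with hE
  set F := β / (h - β) with hF
  have hEpos : 0 < E := by positivity
  have hmθ : 0 < m₀ / θ := by positivity
  have hν' : m₀ / θ * μ ≤ ν := by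
    rw [div_mul_eq_mul_div, div_le_iff₀ hθ]
    linarith [h2]
  have step1 : S * (m₀ / θ * μ) ^ (1 / h) ≤ μ ^ (1 / β) := by
    refine le_trans ?_ key
    have h3 : (m₀ / θ * μ) ^ (1 / h) ≤ ν ^ (1 / h) :=
      rpow_le_rpow (by positivity) hν' (by positivity)
    nlinarith [h3]
  have step2 : S * (m₀ / θ) ^ (1 / h) ≤ μ ^ (1 / β - 1 / h) := by
    rw [mul_rpow (le_of_lt hmθ) (le_of_lt hμ)] at step1
    rw [rpow_sub hμ, le_div_iff₀ (rpow_pos_of_pos hμ _)]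
    nlinarith [step1, rpow_pos_of_pos hμ (1 / h)]
  have step3 : (S * (m₀ / θ) ^ (1 / h)) ^ E ≤ μ := by
    have h4 := rpow_le_rpow (by positivity) step2 hEpos.le
    have hexp : (1 / β - 1 / h) * E = 1 := by
      rw [hE]; field_simp
    rwa [← rpow_mul hμ.le, hexp, rpow_one] at h4
  have hSle : min (S ^ h₁) (S ^ h₂) ≤ S ^ E := min_rpow_le_aux hS hE1 hE2
  have hmle : min ((m₀ / θ) ^ b₁) ((m₀ / θ) ^ b₂) ≤ (m₀ / θ) ^ F :=
    min_rpow_le_aux hmθ hF1 hF2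
  have hsplit : (S * (m₀ / θ) ^ (1 / h)) ^ E = S ^ E * (m₀ / θ) ^ F := by
    rw [mul_rpow hS.le (rpow_pos_of_pos hmθ _).le, ← rpow_mul hmθ.le]
    congr 1
    rw [hE, hF]
    field_simp
  calc min (S ^ h₁) (S ^ h₂) * min ((m₀ / θ) ^ b₁) ((m₀ / θ) ^ b₂)
      ≤ S ^ E * (m₀ / θ) ^ F := by
        apply mul_le_mul hSle hmle (le_min (by positivity) (by positivity))
          (rpow_pos_of_pos hS _).le
    _ = (S * (m₀ / θ) ^ (1 / h)) ^ E := hsplit.symm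
    _ ≤ μ := step3

theorem atomic_weight_lower_bound (a b A B S m₀ θ μ ν h₁ h₂ b₁ b₂ : ℝ)
    (ha : 0 < a) (hb : 0 < b) (hA : 0 < A) (hB : 0 < B) (hS : 0 < S)
    (hm₀ : 0 < m₀) (hθ : 0 < θ) (hμ : 0 < μ) (hν : 0 < ν)
    (hh₁ : 0 < h₁) (hh₂ : 0 < h₂) (hb₁ : 0 < b₁) (hb₂ : 0 < b₂)
    (hab : a ≤ b) (hbA : b < A) (hAB : A ≤ B)
    (hrange : ∀ β ∈ ({a, b} : Set ℝ), ∀ h ∈ ({A, B} : Set ℝ),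
      h₁ ≤ h * β / (h - β) ∧ h * β / (h - β) ≤ h₂ ∧
      b₁ ≤ β / (h - β) ∧ β / (h - β) ≤ b₂)
    (h1 : S * min (ν ^ (1 / A)) (ν ^ (1 / B)) ≤ max (μ ^ (1 / a)) (μ ^ (1 / b)))
    (h2 : m₀ * μ ≤ θ * ν) :
    min (S ^ h₁) (S ^ h₂) * min ((m₀ / θ) ^ b₁) ((m₀ / θ) ^ b₂) ≤ μ := by
  have hma : a ∈ ({a, b} : Set ℝ) := Set.mem_insert _ _
  have hmb : b ∈ ({a, b} : Set ℝ) := Set.mem_insert_of_mem _ rfl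
  have hmA : A ∈ ({A, B} : Set ℝ) := Set.mem_insert _ _
  have hmB : B ∈ ({A, B} : Set ℝ) := Set.mem_insert_of_mem _ rfl
  rcases le_total (ν ^ (1 / A)) (ν ^ (1 / B)) with hm | hm <;>
  rcases le_total (μ ^ (1 / a)) (μ ^ (1 / b)) with hM | hM
  · rw [min_eq_left hm, max_eq_right hM] at h1
    obtain ⟨e1, e2, e3, e4⟩ := hrange b hmb A hmA
    exact core_aux b A S m₀ θ μ ν h₁ h₂ b₁ b₂ hb hbA hS hm₀ hθ hμ hν e1 e2 e3 e4 h1 h2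
  · rw [min_eq_left hm, max_eq_left hM] at h1
    obtain ⟨e1, e2, e3, e4⟩ := hrange a hma A hmA
    exact core_aux a A S m₀ θ μ ν h₁ h₂ b₁ b₂ ha (lt_of_le_of_lt hab hbA) hS hm₀ hθ hμ hν e1 e2 e3 e4 h1 h2
  · rw [min_eq_right hm, max_eq_right hM] at h1
    obtain ⟨e1, e2, e3, e4⟩ := hrange b hmb B hmB
    exact core_aux b B S m₀ θ μ ν h₁ h₂ b₁ b₂ hb (lt_of_lt_of_le hbA hAB) hS hm₀ hθ hμ hν e1 e2 e3 e4 h1 h2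
  · rw [min_eq_right hm, max_eq_left hM] at h1
    obtain ⟨e1, e2, e3, e4⟩ := hrange a hma B hmB
    exact core_aux a B S m₀ θ μ ν h₁ h₂ b₁ b₂ ha (by linarith) hS hm₀ hθ hμ hν e1 e2 e3 e4 h1 h2
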